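/- Let m ≥ 3 and n ≥ 0 be integers, write n = pm + t with p ≥ 0 and 0 ≤ t ≤ m-1, and let I_n = {n - 2r : 0 ≤ r ≤ n} ⊆ ℤ. For s ∈ ℤ let ν_s(X) denote the number of elements of a finite set X ⊆ ℤ congruent to s modulo m. Then 2·ν_0(I_n) + ν_1(I_n) + ν_{-1}(I_n) equals 4p+2 if t ≠ m-1, and equals 4p+4 if t = m-1. -/
import Mathlib


/-- `I n = {n - 2r : 0 ≤ r ≤ n}` as a finite set of integers. -/
def Iset (n : ℕ) : Finset ℤ :=
  (Finset.range (n + 1)).image fun r : ℕ => (n : ℤ) - 2 * (r : ℤ)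

/-- `ν_s(X)`: the number of elements of `X` congruent to `s` modulo `m`. -/
def nu (m : ℕ) (s : ℤ) (X : Finset ℤ) : ℕ :=
  (X.filter fun x : ℤ => ((x : ZMod m) = (s : ZMod m))).card

open Finset

lemma sum_range_two_mul (N : ℕ) (f : ℕ → ℕ) :
    ∑ j ∈ range (2 * N), f j = ∑ i ∈ range N, (f (2 * i) + f (2 * i + 1)) := by
  induction N with
  | zero => simp
  | succ N ih =>
    rw [show 2 * (N + 1) = 2 * N + 1 + 1 by ring, sum_range_succ, sum_range_succ, ih,
      sum_range_succ, Nat.add_assoc]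

lemma nu_eq (m n : ℕ) (s : ℤ) : nu m s (Iset n) =
    ((range (n + 1)).filter fun r : ℕ =>
      (((n : ℤ) - 2 * (r : ℤ) : ℤ) : ZMod m) = (s : ZMod m)).card := by
  unfold nu Iset
  rw [Finset.filter_image, Finset.card_image_of_injective]
  intro a b h
  simp only at h
  omega

lemma count_congr_card (m N v : ℕ) (hm : 0 < m) :
    ((range N).filter fun j : ℕ => ((j : ZMod m) = (v : ZMod m))).card
      = N / m + if v % m < N % m then 1 else 0 := by
  rw [← Nat.count_modEq_card N hm v, Nat.count_eq_card_filter_range]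
  congr 1
  apply Finset.filter_congr
  intro j _
  simp [ZMod.natCast_eq_natCast_iff]

theorem stmt0 (m n p t : ℕ) (hm : 3 ≤ m) (hn : n = p * m + t) (ht : t < m) :
    2 * nu m 0 (Iset n) + nu m 1 (Iset n) + nu m (-1) (Iset n) =
      if t = m - 1 then 4 * p + 4 else 4 * p + 2 := by
  have hm0 : 0 < m := by omega
  -- the combined count equals the number of j in [0, 2n+2) congruent to n or n+1 mod m
  have key : 2 * nu m 0 (Iset n) + nu m 1 (Iset n) + nu m (-1) (Iset n) =
      ((range (2 * (n + 1))).filter fun j : ℕ => ((j : ZMod m) = ((n : ℕ) : ZMod m))).card +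
      ((range (2 * (n + 1))).filter fun j : ℕ => ((j : ZMod m) = ((n + 1 : ℕ) : ZMod m))).card := by
    rw [nu_eq, nu_eq, nu_eq]
    simp only [Finset.card_filter]
    rw [sum_range_two_mul, sum_range_two_mul, Finset.mul_sum, ← Finset.sum_add_distrib,
      ← Finset.sum_add_distrib, ← Finset.sum_add_distrib]
    apply Finset.sum_congr rfl
    intro r _
    have h0 : (((n : ℤ) - 2 * (r : ℤ) : ℤ) : ZMod m) = ((0 : ℤ) : ZMod m) ↔
        (((2 * r : ℕ) : ZMod m) = ((n : ℕ) : ZMod m)) := by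
      push_cast
      constructor <;> intro h <;> linear_combination -h
    have h1 : (((n : ℤ) - 2 * (r : ℤ) : ℤ) : ZMod m) = ((1 : ℤ) : ZMod m) ↔
        (((2 * r + 1 : ℕ) : ZMod m) = ((n : ℕ) : ZMod m)) := by
      push_cast
      constructor <;> intro h <;> linear_combination -h
    have h2 : (((n : ℤ) - 2 * (r : ℤ) : ℤ) : ZMod m) = ((-1 : ℤ) : ZMod m) ↔
        (((2 * r : ℕ) : ZMod m) = ((n + 1 : ℕ) : ZMod m)) := by
      push_cast
      constructor <;> intro h <;> linear_combination -h
    have h3 : (((2 * r + 1 : ℕ) : ZMod m) = ((n + 1 : ℕ) : ZMod m)) ↔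
        (((2 * r : ℕ) : ZMod m) = ((n : ℕ) : ZMod m)) := by
      push_cast
      constructor <;> intro h <;> linear_combination h
    rw [if_congr h0 rfl rfl, if_congr h1 rfl rfl, if_congr h2 rfl rfl, if_congr h3 rfl rfl]
    split_ifs <;> simp <;> omega
  rw [key, count_congr_card _ _ _ hm0, count_congr_card _ _ _ hm0]
  -- now pure arithmetic
  have hnm : n % m = t := by
    rw [hn, Nat.mul_comm, Nat.mul_add_mod, Nat.mod_eq_of_lt ht]
  by_cases hte : t = m - 1
  · have e : 2 * (n + 1) = m * (2 * p + 2) := by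
      rw [hn, hte, Nat.add_assoc, show m - 1 + 1 = m by omega]; ring
    have e1 : n + 1 = m * (p + 1) := by
      rw [hn, hte, Nat.add_assoc, show m - 1 + 1 = m by omega]; ring
    have hdiv : 2 * (n + 1) / m = 2 * p + 2 := by
      rw [e, Nat.mul_div_cancel_left _ hm0]
    have hmod : 2 * (n + 1) % m = 0 := by rw [e, Nat.mul_mod_right]
    have hn1 : (n + 1) % m = 0 := by rw [e1, Nat.mul_mod_right]
    rw [hnm, hn1, hdiv, hmod, if_pos hte]
    split_ifs <;> omega
  · have ht1 : t + 1 < m := by omega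
    have hn1 : (n + 1) % m = t + 1 := by
      rw [hn, Nat.add_assoc, Nat.mul_comm, Nat.mul_add_mod, Nat.mod_eq_of_lt ht1]
    have e : 2 * (n + 1) = m * (2 * p) + (2 * t + 2) := by rw [hn]; ring
    by_cases hlt : 2 * t + 2 < m
    · have hdiv : 2 * (n + 1) / m = 2 * p := by
        rw [e, Nat.mul_add_div hm0, Nat.div_eq_of_lt hlt, Nat.add_zero]
      have hmod : 2 * (n + 1) % m = 2 * t + 2 := by
        rw [e, Nat.mul_add_mod, Nat.mod_eq_of_lt hlt]
      rw [hnm, hn1, hdiv, hmod, if_neg hte]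
      split_ifs <;> omega
    · have hlt2 : 2 * t + 2 - m < m := by omega
      have e2 : 2 * t + 2 = (2 * t + 2 - m) + m := by omega
      have hdiv : 2 * (n + 1) / m = 2 * p + 1 := by
        rw [e, Nat.mul_add_div hm0, e2, Nat.add_div_right _ hm0,
          Nat.div_eq_of_lt hlt2]
      have hmod : 2 * (n + 1) % m = 2 * t + 2 - m := by
        rw [e, Nat.mul_add_mod, e2, Nat.add_mod_right, Nat.mod_eq_of_lt hlt2]
        omega
      rw [hnm, hn1, hdiv, hmod, if_neg hte]
      split_ifs <;> omega
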